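/- Let Q be a finite set with matrices A_q (n×n), B_q (n×m), C_q (p×n), and suppose the nice grammians exist: 𝒫 = Σ_{q∈Q} A_q𝒫A_qᵀ + Σ_{q∈Q} B_qB_qᵀ and 𝒬 = Σ_{q∈Q} A_qᵀ𝒬A_q + Σ_{q∈Q} C_qᵀC_q, given (under strong stability) by 𝒫 = Σ_{v∈Q*} A_v B̃B̃ᵀ A_vᵀ and 𝒬 = Σ_{w∈Q*} A_wᵀ C̃ᵀC̃ A_w, where B̃ = [B_1,…,B_D] and C̃ = [C_1;…;C_D]. Then tr(𝒫𝒬) = Σ_{v,w ∈ Q*} ‖C̃ A_w A_v B̃‖_F², the sum of squared Frobenius norms of all blocks of the Hankel matrix. -/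

import Mathlib

open Matrix

/-- For a word `w = w₁⋯w_k` (a list), `wordProd A w = A_{w_k} ⋯ A_{w_1}`,
with the empty word mapping to the identity. -/
def wordProd {n : ℕ} {Q : Type*} (A : Q → Matrix (Fin n) (Fin n) ℝ)
    (w : List Q) : Matrix (Fin n) (Fin n) ℝ :=
  w.foldl (fun M q => A q * M) 1

private lemma frob_sum_eq_trace {a b : Type*} [Fintype a] [Fintype b]
    (K : Matrix a b ℝ) :
    ∑ i, ∑ j, K i j ^ 2 = (Kᵀ * K).trace := by
  simp [Matrix.trace, Matrix.mul_apply, Matrix.diag, sq]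
  exact Finset.sum_comm

private lemma trace_cycle {n : ℕ} {a b : Type*} [Fintype a] [Fintype b]
    (Ct : Matrix a (Fin n) ℝ) (Bt : Matrix (Fin n) b ℝ)
    (V W : Matrix (Fin n) (Fin n) ℝ) :
    ((Ct*W*V*Bt)ᵀ * (Ct*W*V*Bt)).trace = ((V*(Bt*Btᵀ)*Vᵀ) * (Wᵀ*(Ctᵀ*Ct)*W)).trace := by
  simp only [transpose_mul, ← Matrix.mul_assoc]
  rw [Matrix.trace_mul_comm _ Bt]
  simp only [← Matrix.mul_assoc]
  rw [Matrix.trace_mul_comm _ V]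
  simp only [← Matrix.mul_assoc]

set_option maxHeartbeats 2000000 in
/-- with `B̃ = [B_1,…,B_D]`, `C̃ = [C_1;…;C_D]`, under strong
stability, if `Pg` and `Qg` are the nice controllability and observability
grammians (fixed points given by the convergent series), then
`tr(Pg·Qg) = Σ_{v,w∈Q*} ‖C̃ A_w A_v B̃‖_F²`. -/
theorem stmt12 {n m p : ℕ} {Q : Type*} [Fintype Q]
    (A : Q → Matrix (Fin n) (Fin n) ℝ)
    (B : Q → Matrix (Fin n) (Fin m) ℝ)
    (C : Q → Matrix (Fin p) (Fin n) ℝ)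
    -- strong stability: the series defining the grammians converge
    (P : Matrix (Fin n) (Fin n) ℝ) (hP : P.PosDef)
    (hstab : (P - ∑ q : Q, (A q)ᵀ * P * A q).PosDef)
    (Bt : Matrix (Fin n) (Q × Fin m) ℝ)
    (hBt : ∀ i qj, Bt i qj = B qj.1 i qj.2)
    (Ct : Matrix (Q × Fin p) (Fin n) ℝ)
    (hCt : ∀ qi j, Ct qi j = C qi.1 qi.2 j)
    (Pg Qg : Matrix (Fin n) (Fin n) ℝ)
    (hPg : Pg = ∑' v : List Q, wordProd A v * (Bt * Btᵀ) * (wordProd A v)ᵀ)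
    (hQg : Qg = ∑' w : List Q, (wordProd A w)ᵀ * (Ctᵀ * Ct) * wordProd A w)
    (hPfix : Pg = (∑ q : Q, A q * Pg * (A q)ᵀ) + ∑ q : Q, B q * (B q)ᵀ)
    (hQfix : Qg = (∑ q : Q, (A q)ᵀ * Qg * A q) + ∑ q : Q, (C q)ᵀ * C q) :
    Summable (fun vw : List Q × List Q =>
      ∑ i, ∑ j, (Ct * wordProd A vw.2 * wordProd A vw.1 * Bt) i j ^ 2) ∧
    (Pg * Qg).trace = ∑' vw : List Q × List Q,
      ∑ i, ∑ j, (Ct * wordProd A vw.2 * wordProd A vw.1 * Bt) i j ^ 2 := by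
  set M : List Q → Matrix (Fin n) (Fin n) ℝ :=
    fun v => wordProd A v * (Bt * Btᵀ) * (wordProd A v)ᵀ with hM
  set N : List Q → Matrix (Fin n) (Fin n) ℝ :=
    fun w => (wordProd A w)ᵀ * (Ctᵀ * Ct) * wordProd A w with hN
  -- the summand equals an entrywise trace pairing
  have key : ∀ vw : List Q × List Q,
      (∑ i, ∑ j, (Ct * wordProd A vw.2 * wordProd A vw.1 * Bt) i j ^ 2) =
      ∑ i, ∑ j, M vw.1 i j * N vw.2 j i := by
    intro vw
    rw [frob_sum_eq_trace, trace_cycle]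
    simp [Matrix.trace, Matrix.mul_apply, Matrix.diag, hM, hN]
  by_cases hSM : Summable M
  · by_cases hSN : Summable N
    · -- main case: both series converge
      have hMij : ∀ i j, Summable fun v => M v i j := fun i j =>
        Pi.summable.mp (Pi.summable.mp hSM i) j
      have hNij : ∀ i j, Summable fun w => N w i j := fun i j =>
        Pi.summable.mp (Pi.summable.mp hSN i) j
      have hg : ∀ i j : Fin n,
          Summable (fun vw : List Q × List Q => M vw.1 i j * N vw.2 j i) :=
        fun i j => Summable.of_norm (Summable.mul_norm (R := ℝ)
          (f := fun v : List Q => M v i j) (g := fun w : List Q => N w j i)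
          (hMij i j).abs (hNij j i).abs)
      have hsum : Summable (fun vw : List Q × List Q =>
          ∑ i, ∑ j, M vw.1 i j * N vw.2 j i) :=
        summable_sum fun i _ => summable_sum fun j _ => hg i j
      constructor
      · exact (summable_congr key).mpr hsum
      · have htr : (Pg * Qg).trace = ∑ i, ∑ j, Pg i j * Qg j i := by
          simp [Matrix.trace, Matrix.mul_apply, Matrix.diag]
        rw [htr]
        have hPe : ∀ i j, Pg i j = ∑' v, M v i j := by
          intro i j
          rw [hPg]; exact (congrFun (tsum_apply hSM (x := i)) j).trans (tsum_apply (Pi.summable.mp hSM i) (x := j))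
        have hQe : ∀ i j, Qg i j = ∑' w, N w i j := by
          intro i j
          rw [hQg]; exact (congrFun (tsum_apply hSN (x := i)) j).trans (tsum_apply (Pi.summable.mp hSN i) (x := j))
        have step : ∀ i j : Fin n, Pg i j * Qg j i =
            ∑' vw : List Q × List Q, M vw.1 i j * N vw.2 j i := by
          intro i j
          rw [hPe, hQe]
          exact tsum_mul_tsum_of_summable_norm (hMij i j).abs (hNij j i).abs
        calc ∑ i, ∑ j, Pg i j * Qg j i
            = ∑ i, ∑ j, ∑' vw : List Q × List Q, M vw.1 i j * N vw.2 j i := by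
              simp_rw [step]
          _ = ∑ i, ∑' vw : List Q × List Q, ∑ j, M vw.1 i j * N vw.2 j i := by
              refine Finset.sum_congr rfl fun i _ => ?_
              exact (Summable.tsum_finsetSum fun j _ => hg i j).symm
          _ = ∑' vw : List Q × List Q, ∑ i, ∑ j, M vw.1 i j * N vw.2 j i :=
              (Summable.tsum_finsetSum fun i _ => summable_sum fun j _ => hg i j).symm
          _ = ∑' vw : List Q × List Q,
              ∑ i, ∑ j, (Ct * wordProd A vw.2 * wordProd A vw.1 * Bt) i j ^ 2 :=
              tsum_congr fun vw => (key vw).symm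
    · -- degenerate: Qg = 0, hence Ct = 0
      have hQg0 : Qg = 0 := by rw [hQg, tsum_eq_zero_of_not_summable hSN]
      have hCC : (∑ q : Q, (C q)ᵀ * C q) = 0 := by
        have := hQfix
        rw [hQg0] at this
        simpa using this.symm
      have hC0 : ∀ q i j, C q i j = 0 := by
        intro q i j
        have hdiag : (∑ q : Q, (C q)ᵀ * C q) j j = 0 := by rw [hCC]; simp
        have hdiag' : ∑ q : Q, ∑ i : Fin p, C q i j * C q i j = 0 := by
          simpa [Matrix.sum_apply, Matrix.mul_apply, Matrix.transpose_apply] using hdiag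
        have hnn : ∀ q ∈ Finset.univ (α := Q),
            0 ≤ ∑ i : Fin p, C q i j * C q i j :=
          fun q _ => Finset.sum_nonneg fun i _ => mul_self_nonneg _
        have h1 := (Finset.sum_eq_zero_iff_of_nonneg hnn).mp hdiag' q (Finset.mem_univ q)
        have h2 := (Finset.sum_eq_zero_iff_of_nonneg
          (fun i _ => mul_self_nonneg (C q i j))).mp h1 i (Finset.mem_univ i)
        exact mul_self_eq_zero.mp h2
      have hCt0 : Ct = 0 := by
        ext qi j
        rw [hCt]
        exact hC0 _ _ _
      have hzero : ∀ vw : List Q × List Q,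
          (∑ i, ∑ j, (Ct * wordProd A vw.2 * wordProd A vw.1 * Bt) i j ^ 2) = 0 := by
        intro vw
        rw [hCt0]
        simp [Matrix.zero_mul]
      constructor
      · exact (summable_congr hzero).mpr summable_zero
      · rw [hQg0]
        rw [tsum_congr hzero]
        simp
  · -- degenerate: Pg = 0, hence Bt = 0
    have hPg0 : Pg = 0 := by rw [hPg, tsum_eq_zero_of_not_summable hSM]
    have hBB : (∑ q : Q, B q * (B q)ᵀ) = 0 := by
      have := hPfix
      rw [hPg0] at this
      simpa using this.symm
    have hB0 : ∀ q i j, B q i j = 0 := by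
      intro q i j
      have hdiag : (∑ q : Q, B q * (B q)ᵀ) i i = 0 := by rw [hBB]; simp
      have hdiag' : ∑ q : Q, ∑ k : Fin m, B q i k * B q i k = 0 := by
        simpa [Matrix.sum_apply, Matrix.mul_apply, Matrix.transpose_apply] using hdiag
      have hnn : ∀ q ∈ Finset.univ (α := Q),
          0 ≤ ∑ k : Fin m, B q i k * B q i k :=
        fun q _ => Finset.sum_nonneg fun k _ => mul_self_nonneg _
      have h1 := (Finset.sum_eq_zero_iff_of_nonneg hnn).mp hdiag' q (Finset.mem_univ q)
      have h2 := (Finset.sum_eq_zero_iff_of_nonneg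
        (fun k _ => mul_self_nonneg (B q i k))).mp h1 j (Finset.mem_univ j)
      exact mul_self_eq_zero.mp h2
    have hBt0 : Bt = 0 := by
      ext i qj
      rw [hBt]
      exact hB0 _ _ _
    have hzero : ∀ vw : List Q × List Q,
        (∑ i, ∑ j, (Ct * wordProd A vw.2 * wordProd A vw.1 * Bt) i j ^ 2) = 0 := by
      intro vw
      rw [hBt0]
      simp [Matrix.mul_zero]
    constructor
    · exact (summable_congr hzero).mpr summable_zero
    · rw [hPg0]
      rw [tsum_congr hzero]
      simp
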